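/- Let x(t) = b sin α0 sin β(t) + c, y(t) = −b sin α0 cos β(t) + d with 1 + m(x² + y²) = b β' and ω = β' + 2my sin α0 cos β − 2mx sin α0 sin β − ℓ cos α0 equal to a constant ω0. Then β satisfies the ODE β' + 2md sin α0 cos β − 2mc sin α0 sin β = ℓ cos α0 + 2mb sin²α0 + ω0, and the constants satisfy c² + d² = (b/m)·[(ℓ cos α0 + ω0 − 1/b) + mb sin²α0]. -/

import Mathlib

noncomputable section

open Real

/-- for `x = b sin α0 sin β + c`, `y = −b sin α0 cos β + d` with
`1 + m(x²+y²) = b β'` and `ω = β' + 2my sin α0 cos β − 2mx sin α0 sin β − ℓ cos α0`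
constant equal to `ω0`, the function `β` satisfies the ODE
`β' + 2md sin α0 cos β − 2mc sin α0 sin β = ℓ cos α0 + 2mb sin²α0 + ω0`,
and the constants satisfy
`c² + d² = (b/m)[(ℓ cos α0 + ω0 − 1/b) + mb sin²α0]`. -/
theorem typeI_beta_ode_and_constraint (l m : ℝ) (hm : m ≠ 0)
    (α0 : ℝ) (hα : α0 ∈ Set.Ioo (0:ℝ) π)
    (b c d ω0 : ℝ) (hb : 0 < b)
    (x y β : ℝ → ℝ) (hβ : Differentiable ℝ β) (hβ' : ∀ t, 0 < deriv β t)
    (hxdef : ∀ t, x t = b * sin α0 * sin (β t) + c)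
    (hydef : ∀ t, y t = -b * sin α0 * cos (β t) + d)
    (hFb : ∀ t, 1 + m*((x t)^2 + (y t)^2) = b * deriv β t)
    (hω : ∀ t, deriv β t + 2*m*y t*sin α0*cos (β t) - 2*m*x t*sin α0*sin (β t)
      - l*cos α0 = ω0) :
    (∀ t, deriv β t + 2*m*d*sin α0*cos (β t) - 2*m*c*sin α0*sin (β t)
      = l*cos α0 + 2*m*b*(sin α0)^2 + ω0) ∧
    c^2 + d^2 = (b/m) * ((l*cos α0 + ω0 - 1/b) + m*b*(sin α0)^2) := by
  have ode : ∀ t, deriv β t + 2*m*d*sin α0*cos (β t) - 2*m*c*sin α0*sin (β t)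
      = l*cos α0 + 2*m*b*(sin α0)^2 + ω0 := by
    intro t
    have h := hω t
    rw [hxdef t, hydef t] at h
    linear_combination h + 2*m*b*(sin α0)^2 * sin_sq_add_cos_sq (β t)
  refine ⟨ode, ?_⟩
  have h1 := hFb 0
  have h2 := ode 0
  rw [hxdef 0, hydef 0] at h1
  have hpy := sin_sq_add_cos_sq (β 0)
  field_simp
  linear_combination h1 + b*h2 - m*b^2*(sin α0)^2 * hpy
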